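/- The sequence v(n) = (n/(n+1))^{n+1} for n ≥ 1 is strictly increasing and strictly concave on the positive integers (its first differences v(n+1) − v(n) are positive and strictly decreasing). -/

import Mathlib

noncomputable def fv (x : ℝ) : ℝ := Real.exp ((x + 1) * (Real.log x - Real.log (x + 1)))

noncomputable def sv (x : ℝ) : ℝ := Real.log x - Real.log (x + 1) + x⁻¹

lemma hasDerivAt_fv {x : ℝ} (hx : 0 < x) : HasDerivAt fv (sv x * fv x) x := by
  have hx1 : (0:ℝ) < x + 1 := by linarith
  have hl : HasDerivAt (fun x : ℝ => Real.log x - Real.log (x + 1)) (x⁻¹ - (x + 1)⁻¹) x :=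
    (Real.hasDerivAt_log hx.ne').sub
      (((Real.hasDerivAt_log hx1.ne').comp (h₂ := Real.log) x ((hasDerivAt_id' x).add_const 1)).congr_deriv
        (by simp))
  have h1 : HasDerivAt (fun x : ℝ => (x + 1) * (Real.log x - Real.log (x + 1)))
      (1 * (Real.log x - Real.log (x + 1)) + (x + 1) * (x⁻¹ - (x + 1)⁻¹)) x :=
    ((hasDerivAt_id x).add_const 1).mul hl
  have hxne : x ≠ 0 := hx.ne'
  have hx1ne : x + 1 ≠ 0 := hx1.ne'
  have hsimp : 1 * (Real.log x - Real.log (x + 1)) + (x + 1) * (x⁻¹ - (x + 1)⁻¹) = sv x := by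
    unfold sv; field_simp; ring
  have h2 := h1.exp
  rw [hsimp] at h2
  exact h2.congr_deriv (by rw [mul_comm]; rfl)

lemma hasDerivAt_sv {x : ℝ} (hx : 0 < x) :
    HasDerivAt sv (x⁻¹ - (x + 1)⁻¹ - (x⁻¹)^2) x := by
  have hx1 : (0:ℝ) < x + 1 := by linarith
  have hl : HasDerivAt (fun x : ℝ => Real.log x - Real.log (x + 1)) (x⁻¹ - (x + 1)⁻¹) x :=
    (Real.hasDerivAt_log hx.ne').sub
      (((Real.hasDerivAt_log hx1.ne').comp (h₂ := Real.log) x ((hasDerivAt_id' x).add_const 1)).congr_deriv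
        (by simp))
  have hi : HasDerivAt (fun x : ℝ => x⁻¹) (-(x⁻¹)^2) x := by
    have := hasDerivAt_inv hx.ne'
    exact this.congr_deriv (by ring)
  exact (hl.add hi).congr_deriv (by ring)

lemma sv_pos {x : ℝ} (hx : 0 < x) : 0 < sv x := by
  have hx1 : (0:ℝ) < x + 1 := by linarith
  have h := Real.log_lt_sub_one_of_pos (x := (x + 1) / x) (by positivity)
    (by intro h; rw [div_eq_one_iff_eq hx.ne'] at h; linarith)
  rw [Real.log_div hx1.ne' hx.ne'] at h
  have he : (x + 1) / x - 1 = x⁻¹ := by field_simp; ring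
  rw [he] at h
  unfold sv; linarith

lemma sv_lt {x : ℝ} (hx : 0 < x) : sv x < x⁻¹ - (x + 1)⁻¹ := by
  have hx1 : (0:ℝ) < x + 1 := by linarith
  have h := Real.log_lt_sub_one_of_pos (x := x / (x + 1)) (by positivity)
    (by intro h; rw [div_eq_one_iff_eq hx1.ne'] at h; linarith)
  rw [Real.log_div hx.ne' hx1.ne'] at h
  have he : x / (x + 1) - 1 = -(x + 1)⁻¹ := by field_simp; ring
  rw [he] at h
  unfold sv; linarith

lemma deriv_fv {x : ℝ} (hx : 0 < x) : deriv fv x = sv x * fv x := (hasDerivAt_fv hx).deriv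

lemma cont_fv : ContinuousOn fv (Set.Ioi 0) := fun x hx =>
  (hasDerivAt_fv hx).continuousAt.continuousWithinAt

lemma fv_strictMono : StrictMonoOn fv (Set.Ioi 0) := by
  apply strictMonoOn_of_deriv_pos (convex_Ioi 0) cont_fv
  intro x hx
  rw [interior_Ioi] at hx
  have hx0 : 0 < x := hx
  rw [deriv_fv hx0]
  exact mul_pos (sv_pos hx0) (Real.exp_pos _)

lemma fv_strictConcave : StrictConcaveOn ℝ (Set.Ioi 0) fv := by
  apply strictConcaveOn_of_deriv2_neg (convex_Ioi 0) cont_fv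
  intro x hx
  rw [interior_Ioi] at hx
  have hx0 : 0 < x := hx
  have hx1 : (0:ℝ) < x + 1 := by linarith
  have hxne : x ≠ 0 := hx0.ne'
  have hx1ne : x + 1 ≠ 0 := hx1.ne'
  have heq : deriv fv =ᶠ[nhds x] fun y => sv y * fv y := by
    filter_upwards [Ioi_mem_nhds hx0] with y hy using deriv_fv hy
  have hder : HasDerivAt (fun y => sv y * fv y)
      ((x⁻¹ - (x + 1)⁻¹ - (x⁻¹)^2) * fv x + sv x * (sv x * fv x)) x :=
    (hasDerivAt_sv hx0).mul (hasDerivAt_fv hx0)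
  have hit : deriv^[2] fv x = (x⁻¹ - (x + 1)⁻¹ - (x⁻¹)^2 + sv x * sv x) * fv x := by
    simp only [Function.iterate_succ, Function.iterate_zero, Function.comp_apply, id_eq]
    rw [heq.deriv_eq, hder.deriv]
    ring
  rw [hit]
  have hfx : 0 < fv x := Real.exp_pos _
  have h1 := sv_pos hx0
  have h2 := sv_lt hx0
  have hupos : 0 < x⁻¹ := by positivity
  have hwpos : 0 < (x + 1)⁻¹ := by positivity
  have hw1 : (x + 1)⁻¹ < 1 := by
    rw [inv_lt_one_iff₀]; right; linarith
  have huw : x⁻¹ - (x + 1)⁻¹ = x⁻¹ * (x + 1)⁻¹ := by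
    field_simp; ring
  have key : x⁻¹ - (x + 1)⁻¹ - (x⁻¹)^2 + sv x * sv x < 0 := by
    have hb : sv x * sv x < (x⁻¹ * (x + 1)⁻¹) * (x⁻¹ * (x + 1)⁻¹) := by
      rw [← huw]; nlinarith
    rw [huw]
    -- goal: u*w - u^2 + s^2 < 0 where s^2 < u^2 w^2, and u*w*w + w = u*w ... 
    have hsum : x⁻¹ * (x + 1)⁻¹ + (x + 1)⁻¹ = x⁻¹ := by field_simp; ring
    nlinarith [mul_pos hupos hwpos, mul_pos (mul_pos hupos hwpos) hwpos]
  nlinarith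

lemma fv_eq (n : ℕ) (hn : 1 ≤ n) :
    fv n = ((n : ℝ) / ((n : ℝ) + 1)) ^ (n + 1) := by
  have hn0 : (0:ℝ) < n := by exact_mod_cast hn
  have hn1 : (0:ℝ) < (n:ℝ) + 1 := by linarith
  have hb : (0:ℝ) < (n:ℝ) / ((n:ℝ) + 1) := by positivity
  rw [show ((n : ℝ) / ((n : ℝ) + 1)) ^ (n + 1)
      = ((n : ℝ) / ((n : ℝ) + 1)) ^ (((n + 1 : ℕ) : ℝ)) by
    rw [Real.rpow_natCast]]
  rw [Real.rpow_def_of_pos hb, Real.log_div hn0.ne' hn1.ne']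
  unfold fv
  push_cast
  ring_nf

theorem v_strict_increasing_strict_concave (n : ℕ) (hn : 1 ≤ n) :
    ((n : ℝ) / ((n : ℝ) + 1)) ^ (n + 1) < (((n : ℝ) + 1) / ((n : ℝ) + 2)) ^ (n + 2)
    ∧ (((n : ℝ) + 2) / ((n : ℝ) + 3)) ^ (n + 3) - (((n : ℝ) + 1) / ((n : ℝ) + 2)) ^ (n + 2)
        < (((n : ℝ) + 1) / ((n : ℝ) + 2)) ^ (n + 2) - ((n : ℝ) / ((n : ℝ) + 1)) ^ (n + 1) := by
  have e0 := fv_eq n hn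
  have e1 := fv_eq (n + 1) (by omega)
  have e2 := fv_eq (n + 2) (by omega)
  push_cast at e1 e2
  have hn0 : (0:ℝ) < n := by exact_mod_cast hn
  have m0 : (n:ℝ) ∈ Set.Ioi (0:ℝ) := hn0
  have m1 : (n:ℝ) + 1 ∈ Set.Ioi (0:ℝ) := by simp only [Set.mem_Ioi]; linarith
  have m2 : (n:ℝ) + 2 ∈ Set.Ioi (0:ℝ) := by simp only [Set.mem_Ioi]; linarith
  have hexp1 : n + 1 + 1 = n + 2 := by omega
  have hexp2 : n + 2 + 1 = n + 3 := by omega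
  have h1 : ((n:ℝ) + 1 + 1) = (n:ℝ) + 2 := by ring
  have h2 : ((n:ℝ) + 2 + 1) = (n:ℝ) + 3 := by ring
  rw [hexp1, h1] at e1
  rw [hexp2, h2] at e2
  constructor
  · have := fv_strictMono m0 m1 (by linarith)
    rw [e0, e1] at this
    exact this
  · have hne : (n:ℝ) ≠ (n:ℝ) + 2 := by intro h; linarith
    have hcc := fv_strictConcave.2 m0 m2 hne
      (show (0:ℝ) < 1/2 by norm_num) (show (0:ℝ) < 1/2 by norm_num) (by norm_num)
    simp only [smul_eq_mul] at hcc
    have harg : (1:ℝ)/2 * n + 1/2 * ((n:ℝ) + 2) = (n:ℝ) + 1 := by ring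
    rw [harg, e0, e1, e2] at hcc
    linarith
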